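/- Let 𝒩 be a positive integer, n ≥ 1 an integer, and a a fixed 𝒩×𝒩 complex diagonal matrix. For every pair of integers (i,j) let S_{i,j} : ℂ × ℂ → (𝒩×𝒩 complex matrices) be a function of two complex variables (x, y) (playing the roles of x_n and x_{n+1}) such that at every point and for all integers i, j: (a) the partial derivative of S_{i,j} with respect to x exists and equals S_{i+n,j}·a − a·S_{i,j+n} − Σ_{l=0}^{n−1} S_{n−1−l,j}·a·S_{i,l}; (b) the partial derivative of S_{i,j} with respect to y exists and equals S_{i+n+1,j}·a − a·S_{i,j+n+1} − Σ_{l=0}^{n} S_{n−l,j}·a·S_{i,l}; (c) S_{i+1,j} − S_{i,j+1} = S_{0,j}·S_{i,0}. Define U := S_{0,0} and V := I_𝒩 − S_{−1,0}, and assume V is invertible at every point. Then at every point (∂_y V)·V⁻¹ = −∂_x U. -/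

import Mathlib

open Matrix

theorem stmt_4 (Nc : ℕ) (hNc : 0 < Nc) (n : ℕ) (hn : 1 ≤ n) (d : Fin Nc → ℂ)
    (S : ℤ → ℤ → ℂ → ℂ → Matrix (Fin Nc) (Fin Nc) ℂ)
    (ha : ∀ (i j : ℤ) (x y : ℂ) (p q : Fin Nc), HasDerivAt (fun x' => S i j x' y p q)
      ((S (i + (n : ℤ)) j x y * Matrix.diagonal d - Matrix.diagonal d * S i (j + (n : ℤ)) x y
        - ∑ l ∈ Finset.range n,
            S ((n : ℤ) - 1 - (l : ℤ)) j x y * Matrix.diagonal d * S i (l : ℤ) x y) p q) x)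
    (hb : ∀ (i j : ℤ) (x y : ℂ) (p q : Fin Nc), HasDerivAt (fun y' => S i j x y' p q)
      ((S (i + (n : ℤ) + 1) j x y * Matrix.diagonal d
        - Matrix.diagonal d * S i (j + (n : ℤ) + 1) x y
        - ∑ l ∈ Finset.range (n + 1),
            S ((n : ℤ) - (l : ℤ)) j x y * Matrix.diagonal d * S i (l : ℤ) x y) p q) y)
    (hc : ∀ (i j : ℤ) (x y : ℂ), S (i + 1) j x y - S i (j + 1) x y = S 0 j x y * S i 0 x y)
    (hV : ∀ x y : ℂ, IsUnit ((1 : Matrix (Fin Nc) (Fin Nc) ℂ) - S (-1) 0 x y).det) :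
    ∀ x y : ℂ,
      (Matrix.of fun p q =>
          deriv (fun y' => ((1 : Matrix (Fin Nc) (Fin Nc) ℂ) - S (-1) 0 x y') p q) y)
        * ((1 : Matrix (Fin Nc) (Fin Nc) ℂ) - S (-1) 0 x y)⁻¹
      = - Matrix.of fun p q => deriv (fun x' => S 0 0 x' y p q) x := by
  intro x y
  set a : Matrix (Fin Nc) (Fin Nc) ℂ := Matrix.diagonal d with ha'
  -- key recursion from (c)
  have key : ∀ j : ℤ, S (-1) (j+1) x y = S 0 j x y - S 0 j x y * S (-1) 0 x y := by
    intro j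
    have h := hc (-1) j x y
    norm_num at h
    rw [← h]; abel
  -- matrix of y-derivative of V
  have hMV : (Matrix.of fun p q =>
      deriv (fun y' => ((1 : Matrix (Fin Nc) (Fin Nc) ℂ) - S (-1) 0 x y') p q) y)
      = -(S (n : ℤ) 0 x y * a - a * S (-1) ((n : ℤ)+1) x y
        - ∑ l ∈ Finset.range (n + 1),
            S ((n : ℤ) - (l : ℤ)) 0 x y * a * S (-1) (l : ℤ) x y) := by
    ext p q
    have h1 : ((-1 : ℤ) + n + 1) = (n : ℤ) := by ring
    have h2 : ((0 : ℤ) + n + 1) = (n : ℤ) + 1 := by ring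
    have h := hb (-1) 0 x y p q
    rw [h1, h2] at h
    have h' : HasDerivAt (fun y' => ((1 : Matrix (Fin Nc) (Fin Nc) ℂ) - S (-1) 0 x y') p q)
        (-((S (n : ℤ) 0 x y * a - a * S (-1) ((n : ℤ)+1) x y
        - ∑ l ∈ Finset.range (n + 1),
            S ((n : ℤ) - (l : ℤ)) 0 x y * a * S (-1) (l : ℤ) x y) p q)) y := by
      have := (hasDerivAt_const y ((1 : Matrix (Fin Nc) (Fin Nc) ℂ) p q)).sub h
      simpa [Matrix.sub_apply, Pi.sub_def] using this
    simp only [Matrix.of_apply, Matrix.neg_apply]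
    exact h'.deriv
  -- matrix of x-derivative of U
  have hMU : (Matrix.of fun p q => deriv (fun x' => S 0 0 x' y p q) x)
      = S (n : ℤ) 0 x y * a - a * S 0 (n : ℤ) x y
        - ∑ l ∈ Finset.range n,
            S ((n : ℤ) - 1 - (l : ℤ)) 0 x y * a * S 0 (l : ℤ) x y := by
    ext p q
    have h1 : ((0 : ℤ) + n) = (n : ℤ) := by ring
    have h := ha 0 0 x y p q
    rw [h1] at h
    simp [h.deriv]
  rw [hMV, hMU]
  -- algebraic identity
  have halg : -(S (n : ℤ) 0 x y * a - a * S (-1) ((n : ℤ)+1) x y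
        - ∑ l ∈ Finset.range (n + 1),
            S ((n : ℤ) - (l : ℤ)) 0 x y * a * S (-1) (l : ℤ) x y)
      = (-(S (n : ℤ) 0 x y * a - a * S 0 (n : ℤ) x y
        - ∑ l ∈ Finset.range n,
            S ((n : ℤ) - 1 - (l : ℤ)) 0 x y * a * S 0 (l : ℤ) x y))
        * ((1 : Matrix (Fin Nc) (Fin Nc) ℂ) - S (-1) 0 x y) := by
    have hsum : ∑ l ∈ Finset.range (n + 1),
        S ((n : ℤ) - (l : ℤ)) 0 x y * a * S (-1) (l : ℤ) x y
        = (∑ l ∈ Finset.range n,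
            S ((n : ℤ) - 1 - (l : ℤ)) 0 x y * a * S 0 (l : ℤ) x y)
          - (∑ l ∈ Finset.range n,
            S ((n : ℤ) - 1 - (l : ℤ)) 0 x y * a * S 0 (l : ℤ) x y) * S (-1) 0 x y
          + S (n : ℤ) 0 x y * a * S (-1) 0 x y := by
      rw [Finset.sum_range_succ']
      have hterm : ∀ l ∈ Finset.range n,
          S ((n : ℤ) - ((l + 1 : ℕ) : ℤ)) 0 x y * a * S (-1) ((l + 1 : ℕ) : ℤ) x y
          = S ((n : ℤ) - 1 - (l : ℤ)) 0 x y * a * S 0 (l : ℤ) x y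
            - (S ((n : ℤ) - 1 - (l : ℤ)) 0 x y * a * S 0 (l : ℤ) x y) * S (-1) 0 x y := by
        intro l _
        have e1 : ((n : ℤ) - ((l + 1 : ℕ) : ℤ)) = (n : ℤ) - 1 - (l : ℤ) := by push_cast; ring
        have e2 : (((l + 1 : ℕ)) : ℤ) = (l : ℤ) + 1 := by push_cast; ring
        rw [e1, e2, key (l : ℤ)]
        noncomm_ring
      rw [Finset.sum_congr rfl hterm, Finset.sum_sub_distrib, ← Finset.sum_mul]
      simp only [Nat.cast_zero, sub_zero]
    rw [hsum, key (n : ℤ)]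
    noncomm_ring
  rw [halg, Matrix.mul_nonsing_inv_cancel_right _ _ (hV x y)]
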